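/- Let b₁ ≥ 0 be a natural number. Let α : ℂ[x₁,…,x₆] → ℂ[y₁^{±1}, y₂^{±1}, y₃^{±1}] be the ℂ-algebra homomorphism determined by α(x₁) = y₁, α(x₂) = y₂, α(x₃) = y₁y₂^{−1}, α(x₄) = y₁y₂^{−1}, α(x₅) = y₁^{−b₁−1}y₂y₃, α(x₆) = y₃. Then the kernel of α equals the ideal generated by the three binomials x₁ − x₂x₃, x₄ − x₃, and x₂^{b₁} x₃^{b₁+1} x₅ − x₆. -/

import Mathlib

open MvPolynomial

/-- The Laurent monomial `y₁^{v 0} y₂^{v 1} y₃^{v 2}` in the Laurent polynomial ring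
`ℂ[y₁^{±1}, y₂^{±1}, y₃^{±1}]`, realized as `AddMonoidAlgebra ℂ (Fin 3 → ℤ)`. -/
noncomputable def laurentMonomial3 (v : Fin 3 → ℤ) : AddMonoidAlgebra ℂ (Fin 3 → ℤ) :=
  AddMonoidAlgebra.single v 1

namespace Toric312

noncomputable def F (b₁ : ℕ) : (Fin 3 →₀ ℕ) →+ (Fin 3 → ℤ) where
  toFun d := ![(d 1 : ℤ) - (b₁ + 1) * d 2, (d 0 : ℤ) - d 1 + d 2, (d 2 : ℤ)]
  map_zero' := by funext j; fin_cases j <;> simp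
  map_add' d e := by funext j; fin_cases j <;> simp <;> ring

lemma F_injective (b₁ : ℕ) : Function.Injective (F b₁) := by
  intro d e h
  have h0 := congrFun h 0
  have h1 := congrFun h 1
  have h2 := congrFun h 2
  simp [F] at h0 h1 h2
  rw [h2] at h0 h1
  have e1 : (d 1 : ℤ) = e 1 := by linarith
  rw [e1] at h1
  have e0 : (d 0 : ℤ) = e 0 := by linarith
  ext a; fin_cases a
  · exact (by exact_mod_cast e0 : d 0 = e 0)
  · exact (by exact_mod_cast e1 : d 1 = e 1)
  · exact h2

noncomputable def ψ (b₁ : ℕ) : MvPolynomial (Fin 3) ℂ →ₐ[ℂ] AddMonoidAlgebra ℂ (Fin 3 → ℤ) :=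
  AddMonoidAlgebra.mapDomainAlgHom ℂ ℂ (F b₁)

lemma ψ_injective (b₁ : ℕ) : Function.Injective (ψ b₁) :=
  fun _ _ h => AddMonoidAlgebra.mapDomain_injective (R := ℂ) (F_injective b₁) h

lemma ψ_X (b₁ : ℕ) (i : Fin 3) :
    ψ b₁ (X i) = AddMonoidAlgebra.single (F b₁ (Finsupp.single i 1)) 1 := by
  show AddMonoidAlgebra.mapDomain (F b₁) (AddMonoidAlgebra.single (Finsupp.single i 1) (1 : ℂ)) = _
  exact AddMonoidAlgebra.mapDomain_single

lemma ψ_X0 (b₁ : ℕ) : ψ b₁ (X 0) = AddMonoidAlgebra.single ![0, 1, 0] 1 := by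
  rw [ψ_X]
  congr 1
  funext j; fin_cases j <;> simp [F, Finsupp.single_apply]

lemma ψ_X1 (b₁ : ℕ) : ψ b₁ (X 1) = AddMonoidAlgebra.single ![1, -1, 0] 1 := by
  rw [ψ_X]
  congr 1
  funext j; fin_cases j <;> simp [F, Finsupp.single_apply]

lemma ψ_X2 (b₁ : ℕ) : ψ b₁ (X 2) = AddMonoidAlgebra.single ![-((b₁ : ℤ) + 1), 1, 1] 1 := by
  rw [ψ_X]
  congr 1
  funext j; fin_cases j <;> simp [F, Finsupp.single_apply]

noncomputable def β (b₁ : ℕ) : MvPolynomial (Fin 6) ℂ →ₐ[ℂ] MvPolynomial (Fin 3) ℂ :=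
  aeval ![X 0 * X 1, X 0, X 1, X 1, X 2, X 0 ^ b₁ * X 1 ^ (b₁ + 1) * X 2]

noncomputable def ι : MvPolynomial (Fin 3) ℂ →ₐ[ℂ] MvPolynomial (Fin 6) ℂ :=
  aeval ![X 1, X 2, X 4]

noncomputable def α (b₁ : ℕ) : MvPolynomial (Fin 6) ℂ →ₐ[ℂ] AddMonoidAlgebra ℂ (Fin 3 → ℤ) :=
  MvPolynomial.aeval
    ![laurentMonomial3 ![1, 0, 0], laurentMonomial3 ![0, 1, 0],
      laurentMonomial3 ![1, -1, 0], laurentMonomial3 ![1, -1, 0],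
      laurentMonomial3 ![-((b₁ : ℤ) + 1), 1, 1], laurentMonomial3 ![0, 0, 1]]

lemma β_X0 (b₁ : ℕ) : β b₁ (X 0) = X 0 * X 1 := by rw [β, aeval_X]; rfl
lemma β_X1 (b₁ : ℕ) : β b₁ (X 1) = X 0 := by rw [β, aeval_X]; rfl
lemma β_X2 (b₁ : ℕ) : β b₁ (X 2) = X 1 := by rw [β, aeval_X]; rfl
lemma β_X3 (b₁ : ℕ) : β b₁ (X 3) = X 1 := by rw [β, aeval_X]; rfl
lemma β_X4 (b₁ : ℕ) : β b₁ (X 4) = X 2 := by rw [β, aeval_X]; rfl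
lemma β_X5 (b₁ : ℕ) : β b₁ (X 5) = X 0 ^ b₁ * X 1 ^ (b₁ + 1) * X 2 := by rw [β, aeval_X]; rfl

lemma comp_eq (b₁ : ℕ) : (ψ b₁).comp (β b₁) = α b₁ := by
  have veq0 : (![0, 1, 0] + ![1, -1, 0] : Fin 3 → ℤ) = ![1, 0, 0] := by
    funext j; fin_cases j <;> simp
  have veq5 : (b₁ • ![0, 1, 0] + (b₁ + 1) • ![1, -1, 0] + ![-((b₁ : ℤ) + 1), 1, 1] :
      Fin 3 → ℤ) = ![0, 0, 1] := by
    funext j; fin_cases j <;> simp <;> push_cast <;> ring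
  have e0 : ψ b₁ (β b₁ (X 0)) = α b₁ (X 0) := by
    rw [β_X0, map_mul, ψ_X0, ψ_X1, AddMonoidAlgebra.single_mul_single, veq0,
      show (α b₁) (X 0) = laurentMonomial3 ![1, 0, 0] by rw [α, aeval_X]; rfl, laurentMonomial3]
    norm_num
  have e1 : ψ b₁ (β b₁ (X 1)) = α b₁ (X 1) := by
    rw [β_X1, ψ_X0, show (α b₁) (X 1) = laurentMonomial3 ![0, 1, 0] by rw [α, aeval_X]; rfl,
      laurentMonomial3]
  have e2 : ψ b₁ (β b₁ (X 2)) = α b₁ (X 2) := by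
    rw [β_X2, ψ_X1, show (α b₁) (X 2) = laurentMonomial3 ![1, -1, 0] by rw [α, aeval_X]; rfl,
      laurentMonomial3]
  have e3 : ψ b₁ (β b₁ (X 3)) = α b₁ (X 3) := by
    rw [β_X3, ψ_X1, show (α b₁) (X 3) = laurentMonomial3 ![1, -1, 0] by rw [α, aeval_X]; rfl,
      laurentMonomial3]
  have e4 : ψ b₁ (β b₁ (X 4)) = α b₁ (X 4) := by
    rw [β_X4, ψ_X2, show (α b₁) (X 4) = laurentMonomial3 ![-((b₁ : ℤ) + 1), 1, 1] by
      rw [α, aeval_X]; rfl, laurentMonomial3]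
  have e5 : ψ b₁ (β b₁ (X 5)) = α b₁ (X 5) := by
    rw [β_X5, map_mul, map_mul, map_pow, map_pow, ψ_X0, ψ_X1, ψ_X2,
      AddMonoidAlgebra.single_pow, AddMonoidAlgebra.single_pow,
      AddMonoidAlgebra.single_mul_single, AddMonoidAlgebra.single_mul_single, veq5,
      show (α b₁) (X 5) = laurentMonomial3 ![0, 0, 1] by rw [α, aeval_X]; rfl, laurentMonomial3]
    norm_num
  apply MvPolynomial.algHom_ext
  intro i
  fin_cases i
  exacts [e0, e1, e2, e3, e4, e5]

end Toric312

open Toric312 in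
theorem toric_ideal_case_3_1_2 (b₁ : ℕ) :
    RingHom.ker (MvPolynomial.aeval
        ![laurentMonomial3 ![1, 0, 0], laurentMonomial3 ![0, 1, 0],
          laurentMonomial3 ![1, -1, 0], laurentMonomial3 ![1, -1, 0],
          laurentMonomial3 ![-((b₁ : ℤ) + 1), 1, 1], laurentMonomial3 ![0, 0, 1]] :
      MvPolynomial (Fin 6) ℂ →ₐ[ℂ] AddMonoidAlgebra ℂ (Fin 3 → ℤ)) =
    Ideal.span {(X 0 - X 1 * X 2 : MvPolynomial (Fin 6) ℂ),
      X 3 - X 2, X 1 ^ b₁ * X 2 ^ (b₁ + 1) * X 4 - X 5} := by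
  have hα : (MvPolynomial.aeval
        ![laurentMonomial3 ![1, 0, 0], laurentMonomial3 ![0, 1, 0],
          laurentMonomial3 ![1, -1, 0], laurentMonomial3 ![1, -1, 0],
          laurentMonomial3 ![-((b₁ : ℤ) + 1), 1, 1], laurentMonomial3 ![0, 0, 1]] :
      MvPolynomial (Fin 6) ℂ →ₐ[ℂ] AddMonoidAlgebra ℂ (Fin 3 → ℤ)) = α b₁ := rfl
  rw [hα]
  set I : Ideal (MvPolynomial (Fin 6) ℂ) := Ideal.span {(X 0 - X 1 * X 2 : MvPolynomial (Fin 6) ℂ),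
      X 3 - X 2, X 1 ^ b₁ * X 2 ^ (b₁ + 1) * X 4 - X 5} with hI
  have m0 : (X 0 - X 1 * X 2 : MvPolynomial (Fin 6) ℂ) ∈ I :=
    Ideal.subset_span (Set.mem_insert _ _)
  have m1 : (X 3 - X 2 : MvPolynomial (Fin 6) ℂ) ∈ I :=
    Ideal.subset_span (Set.mem_insert_of_mem _ (Set.mem_insert _ _))
  have m2 : (X 1 ^ b₁ * X 2 ^ (b₁ + 1) * X 4 - X 5 : MvPolynomial (Fin 6) ℂ) ∈ I :=
    Ideal.subset_span (Set.mem_insert_of_mem _ (Set.mem_insert_of_mem _ rfl))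
  have hquot : ∀ p : MvPolynomial (Fin 6) ℂ,
      Ideal.Quotient.mk I (ι (β b₁ p)) = Ideal.Quotient.mk I p := by
    have key : (Ideal.Quotient.mkₐ ℂ I).comp (ι.comp (β b₁)) = Ideal.Quotient.mkₐ ℂ I := by
      apply MvPolynomial.algHom_ext
      intro i
      fin_cases i
      · show Ideal.Quotient.mk I (ι (β b₁ (X 0))) = Ideal.Quotient.mk I (X 0)
        rw [β_X0, show ι (X 0 * X 1 : MvPolynomial (Fin 3) ℂ) = X 1 * X 2 by
          rw [map_mul, ι, aeval_X, aeval_X]; rfl, Ideal.Quotient.eq,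
          show (X 1 * X 2 - X 0 : MvPolynomial (Fin 6) ℂ) = -(X 0 - X 1 * X 2) by ring]
        exact I.neg_mem m0
      · show Ideal.Quotient.mk I (ι (β b₁ (X 1))) = Ideal.Quotient.mk I (X 1)
        rw [β_X1, ι, aeval_X]
        rfl
      · show Ideal.Quotient.mk I (ι (β b₁ (X 2))) = Ideal.Quotient.mk I (X 2)
        rw [β_X2, ι, aeval_X]
        rfl
      · show Ideal.Quotient.mk I (ι (β b₁ (X 3))) = Ideal.Quotient.mk I (X 3)
        rw [β_X3, show ι (X 1 : MvPolynomial (Fin 3) ℂ) = X 2 by rw [ι, aeval_X]; rfl,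
          Ideal.Quotient.eq,
          show (X 2 - X 3 : MvPolynomial (Fin 6) ℂ) = -(X 3 - X 2) by ring]
        exact I.neg_mem m1
      · show Ideal.Quotient.mk I (ι (β b₁ (X 4))) = Ideal.Quotient.mk I (X 4)
        rw [β_X4, ι, aeval_X]
        rfl
      · show Ideal.Quotient.mk I (ι (β b₁ (X 5))) = Ideal.Quotient.mk I (X 5)
        rw [β_X5, show ι (X 0 ^ b₁ * X 1 ^ (b₁ + 1) * X 2 : MvPolynomial (Fin 3) ℂ)
            = X 1 ^ b₁ * X 2 ^ (b₁ + 1) * X 4 by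
          rw [map_mul, map_mul, map_pow, map_pow, ι, aeval_X, aeval_X, aeval_X]; rfl,
          Ideal.Quotient.eq]
        exact m2
    intro p
    exact congrArg (fun f => f p) (congrArg DFunLike.coe key)
  ext p
  rw [RingHom.mem_ker]
  constructor
  · intro hp
    have hψ : ψ b₁ (β b₁ p) = 0 := by
      have h := congrArg (fun f => f p) (congrArg DFunLike.coe (comp_eq b₁))
      simp only [AlgHom.coe_comp, Function.comp_apply] at h
      rw [h]; exact hp
    have hβ : β b₁ p = 0 := ψ_injective b₁ (by rw [hψ, map_zero])
    have h := hquot p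
    rw [hβ, map_zero, map_zero] at h
    exact (Ideal.Quotient.eq_zero_iff_mem).mp h.symm
  · intro hp
    have hker : I ≤ RingHom.ker (α b₁) := by
      rw [hI, Ideal.span_le]
      rintro g (rfl | rfl | rfl) <;>
        rw [SetLike.mem_coe, RingHom.mem_ker, ← comp_eq b₁, AlgHom.comp_apply]
      · rw [map_sub, β_X0, map_mul, β_X1, β_X2, sub_self, map_zero]
      · rw [map_sub, β_X3, β_X2, sub_self, map_zero]
      · rw [map_sub, map_mul, map_mul, map_pow, map_pow, β_X1, β_X2, β_X4, β_X5, sub_self,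
          map_zero]
    exact hker hp
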